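/- Under the DAN (Polyak adaptive Newton) iteration, for every k ≤ k₀ one has ‖x_k − x⋆‖ ≤ (μ/L)·(k₀ − k + 2γ/(1 − γ)), and for every k > k₀ one has ‖x_k − x⋆‖ ≤ 2μ·γ^(2^(k−k₀)) / (L·(1 − γ^(2^(k−k₀)))). -/

import Mathlib

lemma dan_grad_diff {p : ℕ} {f : EuclideanSpace ℝ (Fin p) → ℝ} (hf : ContDiff ℝ 2 f) :
    Differentiable ℝ (gradient f) := by
  have h1 : ContDiff ℝ 1 (fun y => fderiv ℝ f y) := hf.fderiv_right (by norm_num)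
  have : gradient f = fun y => (InnerProductSpace.toDual ℝ (EuclideanSpace ℝ (Fin p))).symm
      (fderiv ℝ f y) := rfl
  rw [this]
  exact ((InnerProductSpace.toDual ℝ _).symm.toContinuousLinearEquiv.contDiff.comp
    h1).differentiable one_ne_zero

lemma dan_taylor {p : ℕ} {f : EuclideanSpace ℝ (Fin p) → ℝ} (hf : ContDiff ℝ 2 f) {L : ℝ}
    (hlip : ∀ x y : EuclideanSpace ℝ (Fin p),
      ‖fderiv ℝ (gradient f) x - fderiv ℝ (gradient f) y‖ ≤ L * ‖x - y‖)
    (a b : EuclideanSpace ℝ (Fin p)) :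
    ‖gradient f b - gradient f a - fderiv ℝ (gradient f) a (b - a)‖ ≤ L / 2 * ‖b - a‖ ^ 2 := by
  set g := gradient f with hg
  set H := fun y => fderiv ℝ g y with hH
  set d := b - a with hd
  set φ : ℝ → EuclideanSpace ℝ (Fin p) := fun t => g (a + t • d) - t • (H a d) - g a with hφ
  set D : ℝ → EuclideanSpace ℝ (Fin p) := fun t => H (a + t • d) d - H a d with hD
  have hdiff := dan_grad_diff hf
  have hc : ∀ t : ℝ, HasDerivAt (fun s : ℝ => a + s • d) d t := by
    intro t
    simpa using ((hasDerivAt_id t).smul_const d).const_add a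
  have hφ' : ∀ t : ℝ, HasDerivAt φ (D t) t := by
    intro t
    have h1 : HasDerivAt (fun s : ℝ => g (a + s • d)) (H (a + t • d) d) t := by
      have := (hdiff (a + t • d)).hasFDerivAt.comp_hasDerivAt t (hc t); exact this
    have h2 : HasDerivAt (fun s : ℝ => s • (H a d)) (H a d) t := by
      simpa using (hasDerivAt_id t).smul_const (H a d)
    simpa [hφ, hD] using (h1.sub h2).sub_const (g a)
  have hB : ∀ t : ℝ, HasDerivAt (fun s => L / 2 * ‖d‖ ^ 2 * s ^ 2) (L * ‖d‖ ^ 2 * t) t := by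
    intro t
    have := (hasDerivAt_pow 2 t).const_mul (L / 2 * ‖d‖ ^ 2)
    rw [show L * ‖d‖ ^ 2 * t = L / 2 * ‖d‖ ^ 2 * (↑2 * t ^ (2 - 1)) by push_cast; ring]
    exact this
  have bound : ∀ t ∈ Set.Ico (0 : ℝ) 1, ‖D t‖ ≤ L * ‖d‖ ^ 2 * t := by
    intro t ht
    have h0 : D t = (H (a + t • d) - H a) d := by
      simp [hD, ContinuousLinearMap.sub_apply]
    have h1 : ‖D t‖ ≤ ‖H (a + t • d) - H a‖ * ‖d‖ := by
      rw [h0]; exact (H (a + t • d) - H a).le_opNorm d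
    have h2 : ‖H (a + t • d) - H a‖ ≤ L * ‖(a + t • d) - a‖ := hlip _ _
    have h3 : ‖(a + t • d) - a‖ = t * ‖d‖ := by
      simp [norm_smul, abs_of_nonneg ht.1]
    calc ‖D t‖ ≤ (L * (t * ‖d‖)) * ‖d‖ := h1.trans (by
            rw [← h3] at *
            exact mul_le_mul_of_nonneg_right (h2.trans (le_of_eq rfl)) (norm_nonneg d))
      _ = L * ‖d‖ ^ 2 * t := by ring
  have key := image_norm_le_of_norm_deriv_right_le_deriv_boundary
    (f := φ) (f' := D) (a := (0:ℝ)) (b := 1)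
    (fun t _ => (hφ' t).continuousAt.continuousWithinAt)
    (fun t _ => (hφ' t).hasDerivWithinAt)
    (by simp [hφ]) hB bound (Set.right_mem_Icc.2 zero_le_one)
  have hφ1 : φ 1 = g b - g a - H a d := by
    simp [hφ, hd]
    abel
  rw [hφ1] at key
  simpa using key
lemma dan_strong_mono {p : ℕ} {f : EuclideanSpace ℝ (Fin p) → ℝ} (hf : ContDiff ℝ 2 f) {μ : ℝ}
    (hstrong : ∀ x v : EuclideanSpace ℝ (Fin p),
      μ * ‖v‖ ^ 2 ≤ inner ℝ (fderiv ℝ (gradient f) x v) v)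
    (a b : EuclideanSpace ℝ (Fin p)) :
    μ * ‖b - a‖ ^ 2 ≤ (inner ℝ (gradient f b - gradient f a) (b - a) : ℝ) := by
  set g := gradient f with hg
  set H := fun y => fderiv ℝ g y with hH
  set d := b - a with hd
  have hdiff := dan_grad_diff hf
  have hc : ∀ t : ℝ, HasDerivAt (fun s : ℝ => a + s • d) d t := by
    intro t
    simpa using ((hasDerivAt_id t).smul_const d).const_add a
  set ψ : ℝ → ℝ := fun t => (inner ℝ (g (a + t • d)) d : ℝ) - t * (μ * ‖d‖ ^ 2) with hψdef
  have hψ : ∀ t : ℝ, HasDerivAt ψ ((inner ℝ (H (a + t • d) d) d : ℝ) - μ * ‖d‖ ^ 2) t := by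
    intro t
    have h1 : HasDerivAt (fun s : ℝ => g (a + s • d)) (H (a + t • d) d) t := by
      have := (hdiff (a + t • d)).hasFDerivAt.comp_hasDerivAt t (hc t); exact this
    have h2 : HasDerivAt (fun s : ℝ => (inner ℝ (g (a + s • d)) d : ℝ))
        ((inner ℝ (H (a + t • d) d) d : ℝ)) t := by
      simpa using h1.inner ℝ (hasDerivAt_const t d)
    have h3 := h2.sub ((hasDerivAt_id' t).mul_const (μ * ‖d‖ ^ 2))
    simp only [one_mul] at h3
    exact h3
  have hmono : Monotone ψ := by
    apply monotone_of_deriv_nonneg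
    · exact fun t => (hψ t).differentiableAt
    · intro t
      rw [(hψ t).deriv]
      have := hstrong (a + t • d) d
      linarith
  have h01 := hmono (zero_le_one)
  simp only [hψdef, zero_smul, add_zero, one_smul, zero_mul, sub_zero, one_mul] at h01
  have hab : a + d = b := by rw [hd]; abel
  rw [hab] at h01
  rw [inner_sub_left]
  linarith

lemma dan_Hv_lb {p : ℕ} {f : EuclideanSpace ℝ (Fin p) → ℝ} {μ : ℝ} (hμ : 0 ≤ μ)
    (hstrong : ∀ x v : EuclideanSpace ℝ (Fin p),
      μ * ‖v‖ ^ 2 ≤ inner ℝ (fderiv ℝ (gradient f) x v) v)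
    (x v : EuclideanSpace ℝ (Fin p)) :
    μ * ‖v‖ ≤ ‖fderiv ℝ (gradient f) x v‖ := by
  rcases eq_or_ne v 0 with rfl | hv
  · simp
  · have h1 := hstrong x v
    have h2 : (inner ℝ (fderiv ℝ (gradient f) x v) v : ℝ) ≤ ‖fderiv ℝ (gradient f) x v‖ * ‖v‖ :=
      real_inner_le_norm _ _
    have hv' : 0 < ‖v‖ := norm_pos_iff.2 hv
    nlinarith [norm_nonneg (fderiv ℝ (gradient f) x v)]

lemma dan_dist_lb {p : ℕ} {f : EuclideanSpace ℝ (Fin p) → ℝ} (hf : ContDiff ℝ 2 f) {μ : ℝ}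
    (hμ : 0 ≤ μ)
    (hstrong : ∀ x v : EuclideanSpace ℝ (Fin p),
      μ * ‖v‖ ^ 2 ≤ inner ℝ (fderiv ℝ (gradient f) x v) v)
    (a b : EuclideanSpace ℝ (Fin p)) :
    μ * ‖b - a‖ ≤ ‖gradient f b - gradient f a‖ := by
  rcases eq_or_ne b a with rfl | hab
  · simp
  · have h1 := dan_strong_mono hf hstrong a b
    have h2 : (inner ℝ (gradient f b - gradient f a) (b - a) : ℝ)
        ≤ ‖gradient f b - gradient f a‖ * ‖b - a‖ := real_inner_le_norm _ _
    have hba : 0 < ‖b - a‖ := by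
      rw [norm_pos_iff, sub_ne_zero]; exact hab
    nlinarith [norm_nonneg (gradient f b - gradient f a)]

set_option maxHeartbeats 1000000

open Filter Topology

theorem dan_distance_bounds (p : ℕ) (hp : 1 ≤ p)
    (f : EuclideanSpace ℝ (Fin p) → ℝ) (hf : ContDiff ℝ 2 f)
    (μ L : ℝ) (hμ : 0 < μ) (hL : 0 < L)
    (hstrong : ∀ x v : EuclideanSpace ℝ (Fin p),
      μ * ‖v‖ ^ 2 ≤ inner ℝ (fderiv ℝ (gradient f) x v) v)
    (hlip : ∀ x y : EuclideanSpace ℝ (Fin p),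
      ‖fderiv ℝ (gradient f) x - fderiv ℝ (gradient f) y‖ ≤ L * ‖x - y‖)
    (xs : EuclideanSpace ℝ (Fin p)) (hxs : gradient f xs = 0)
    (x : ℕ → EuclideanSpace ℝ (Fin p)) (α : ℕ → ℝ)
    (hα : ∀ k, α k = min 1 (μ ^ 2 / (L * ‖gradient f (x k)‖)))
    (hupd : ∀ k, fderiv ℝ (gradient f) (x k) (x (k + 1) - x k)
      = -(α k) • gradient f (x k))
    (k₀ : ℕ) (hk₀ : (k₀ : ℤ) = max 0 (⌈2 * L / μ ^ 2 * ‖gradient f (x 0)‖⌉ - 2))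
    (γ : ℝ) (hγ : γ = L / (2 * μ ^ 2) * ‖gradient f (x 0)‖ - (k₀ : ℝ) / 4) :
    (∀ k ≤ k₀, ‖x k - xs‖ ≤ μ / L * ((k₀ : ℝ) - (k : ℝ) + 2 * γ / (1 - γ))) ∧
    (∀ k > k₀, ‖x k - xs‖ ≤
      2 * μ * γ ^ 2 ^ (k - k₀) / (L * (1 - γ ^ 2 ^ (k - k₀)))) := by
  have hμ2 : (0:ℝ) < μ ^ 2 := by positivity
  set G : ℕ → ℝ := fun k => ‖gradient f (x k)‖ with hG
  have hGnn : ∀ k, 0 ≤ G k := fun k => norm_nonneg _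
  set c : ℝ := L / (2 * μ ^ 2) with hc
  have hcpos : 0 < c := by positivity
  have hα0 : ∀ k, 0 ≤ α k := by
    intro k
    rw [hα k]
    have : (0:ℝ) ≤ μ ^ 2 / (L * G k) := by positivity
    exact le_min zero_le_one this
  have hα1 : ∀ k, α k ≤ 1 := fun k => by rw [hα k]; exact min_le_left _ _
  -- key one-step inequality
  have hstep : ∀ k, G (k+1) ≤ (1 - α k) * G k + c * (α k * G k) ^ 2 := by
    intro k
    have hΔ : μ * ‖x (k+1) - x k‖ ≤ α k * G k := by
      have h1 := dan_Hv_lb hμ.le hstrong (x k) (x (k+1) - x k)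
      rw [hupd k] at h1
      rwa [norm_smul, norm_neg, Real.norm_eq_abs, abs_of_nonneg (hα0 k)] at h1
    have htay := dan_taylor hf hlip (x k) (x (k+1))
    rw [hupd k] at htay
    have heq : gradient f (x (k+1)) - gradient f (x k) - -(α k) • gradient f (x k)
        = gradient f (x (k+1)) - (1 - α k) • gradient f (x k) := by
      rw [neg_smul, sub_smul, one_smul]; abel
    rw [heq] at htay
    have h2 : G (k+1) ≤ L / 2 * ‖x (k+1) - x k‖ ^ 2 + (1 - α k) * G k := by
      have h3 : G (k+1) = ‖(gradient f (x (k+1)) - (1 - α k) • gradient f (x k))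
          + (1 - α k) • gradient f (x k)‖ := by rw [sub_add_cancel]
      rw [h3]
      refine (norm_add_le _ _).trans ?_
      have h4 : ‖(1 - α k) • gradient f (x k)‖ = (1 - α k) * G k := by
        rw [norm_smul, Real.norm_eq_abs, abs_of_nonneg (by linarith [hα1 k])]
      rw [h4]
      exact add_le_add_left htay _
    have h5 : L / 2 * ‖x (k+1) - x k‖ ^ 2 ≤ c * (α k * G k) ^ 2 := by
      rw [hc]
      have h6 : (μ * ‖x (k+1) - x k‖) ^ 2 ≤ (α k * G k) ^ 2 := by
        have := mul_self_le_mul_self (by positivity) hΔ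
        simpa [pow_two] using this
      rw [div_mul_eq_mul_div, div_mul_eq_mul_div, div_le_div_iff₀ (by norm_num) (by positivity)]
      nlinarith [norm_nonneg (x (k+1) - x k)]
    linarith
  -- phase 1 step
  have hP1 : ∀ k, 1/2 ≤ c * G k → c * G (k+1) ≤ c * G k - 1/4 := by
    intro k hk
    have hLG : μ ^ 2 ≤ L * G k := by
      rw [hc] at hk
      rw [div_mul_eq_mul_div, le_div_iff₀ (by positivity)] at hk
      nlinarith
    have hGpos : 0 < G k := by nlinarith
    have hαk : α k = μ ^ 2 / (L * G k) := by
      rw [hα k]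
      exact min_eq_right ((div_le_one (by positivity)).2 hLG)
    have hrhs : (1 - α k) * G k + c * (α k * G k) ^ 2 = G k - μ ^ 2 / (2 * L) := by
      rw [hαk, hc]
      field_simp
      ring
    have := hstep k
    rw [hrhs] at this
    have h7 : c * G (k+1) ≤ c * (G k - μ ^ 2 / (2 * L)) :=
      mul_le_mul_of_nonneg_left this hcpos.le
    have h8 : c * (G k - μ ^ 2 / (2 * L)) = c * G k - 1/4 := by
      rw [hc]; field_simp; ring
    linarith
  -- phase 2 step
  have hP2 : ∀ k, c * G k ≤ 1/2 → c * G (k+1) ≤ (c * G k) ^ 2 := by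
    intro k hk
    rcases eq_or_lt_of_le (hGnn k) with h0 | hGpos
    · have h0' : G k = 0 := h0.symm
      have hα' : α k = 0 := by
        rw [hα k]
        have h0'' : ‖gradient f (x k)‖ = 0 := h0'
        rw [h0'', mul_zero, div_zero]
        simp
      have hs := hstep k
      rw [hα', h0'] at hs
      norm_num at hs
      have h9 : G (k+1) = 0 := le_antisymm hs (hGnn (k+1))
      rw [h9, h0']
      norm_num
    · have hLG : L * G k ≤ μ ^ 2 := by
        rw [hc] at hk
        rw [div_mul_eq_mul_div, div_le_iff₀ (by positivity)] at hk
        nlinarith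
      have hαk : α k = 1 := by
        rw [hα k]
        exact min_eq_left ((one_le_div (by positivity)).2 hLG)
      have := hstep k
      rw [hαk] at this
      simp only [one_mul, sub_self, zero_mul, zero_add] at this
      have h7 : c * G (k+1) ≤ c * (c * G k ^ 2) :=
        mul_le_mul_of_nonneg_left this hcpos.le
      calc c * G (k+1) ≤ c * (c * G k ^ 2) := h7
        _ = (c * G k) ^ 2 := by ring
  -- k₀ and γ facts
  have h4h : 2 * L / μ ^ 2 * ‖gradient f (x 0)‖ = 4 * (c * G 0) := by
    rw [hc, hG]; field_simp; ring
  have hγ' : γ = c * G 0 - (k₀ : ℝ) / 4 := hγ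
  rw [h4h] at hk₀
  have hk₀ge : (4 : ℝ) * (c * G 0) - 2 ≤ (k₀ : ℝ) := by
    have h1 : (⌈(4:ℝ) * (c * G 0)⌉ - 2 : ℤ) ≤ (k₀ : ℤ) := hk₀ ▸ le_max_right _ _
    have h2 : (4:ℝ) * (c * G 0) ≤ (⌈(4:ℝ) * (c * G 0)⌉ : ℝ) := Int.le_ceil _
    have h3 : ((⌈(4:ℝ) * (c * G 0)⌉ - 2 : ℤ) : ℝ) ≤ ((k₀ : ℤ) : ℝ) := by exact_mod_cast h1
    push_cast at h3
    linarith
  have hγhalf : γ ≤ 1/2 := by rw [hγ']; linarith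
  have hγ14 : 1 ≤ k₀ → 1/4 ≤ γ := by
    intro h1
    have hk1 : (1:ℤ) ≤ (k₀:ℤ) := by exact_mod_cast h1
    have hmax : max 0 (⌈(4:ℝ) * (c * G 0)⌉ - 2) = ⌈(4:ℝ) * (c * G 0)⌉ - 2 := by
      rcases le_total (⌈(4:ℝ) * (c * G 0)⌉ - 2) 0 with hle | hle
      · exfalso
        rw [max_eq_left hle] at hk₀
        omega
      · exact max_eq_right hle
    rw [hmax] at hk₀
    have h2 : ((k₀ : ℤ) : ℝ) = (⌈(4:ℝ) * (c * G 0)⌉ : ℝ) - 2 := by exact_mod_cast hk₀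
    have h3 : (⌈(4:ℝ) * (c * G 0)⌉ : ℝ) < 4 * (c * G 0) + 1 := Int.ceil_lt_add_one _
    push_cast at h2
    rw [hγ']
    linarith
  have hγ0 : 0 ≤ γ := by
    rcases Nat.eq_zero_or_pos k₀ with h1 | h1
    · rw [hγ', h1]
      have : 0 ≤ c * G 0 := by positivity
      push_cast
      linarith
    · linarith [hγ14 h1]
  -- phase 1 induction
  have hind : ∀ k ≤ k₀, c * G k ≤ γ + ((k₀ : ℝ) - (k : ℝ)) / 4 := by
    intro k
    induction k with
    | zero =>
      intro _
      rw [hγ']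
      push_cast
      linarith
    | succ n ih =>
      intro hn
      have hn' : n ≤ k₀ := Nat.le_of_succ_le hn
      have h1 := ih hn'
      by_cases hcase : 1/2 ≤ c * G n
      · have h2 := hP1 n hcase
        push_cast
        push_cast at h1
        linarith
      · push_neg at hcase
        have h2 := hP2 n hcase.le
        have h3 : (c * G n) ^ 2 ≤ 1/4 := by
          have hnn : 0 ≤ c * G n := mul_nonneg hcpos.le (hGnn n)
          have := mul_le_mul hcase.le hcase.le hnn (by norm_num : (0:ℝ) ≤ 1/2)
          calc (c * G n) ^ 2 = (c * G n) * (c * G n) := sq (c * G n) ▸ by ring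
            _ ≤ 1/2 * (1/2) := this
            _ = 1/4 := by norm_num
        have h4 : 1/4 ≤ γ := hγ14 (by omega)
        have h5 : (n:ℝ) + 1 ≤ (k₀:ℝ) := by exact_mod_cast hn
        push_cast
        linarith
  -- phase 2 induction
  have hind2 : ∀ j : ℕ, c * G (k₀ + j) ≤ γ ^ 2 ^ j := by
    intro j
    induction j with
    | zero => simpa using (hind k₀ le_rfl).trans (by simp)
    | succ n ih =>
      have hpow : γ ^ 2 ^ n ≤ 1/2 := by
        calc γ ^ 2 ^ n ≤ (1/2 : ℝ) ^ 2 ^ n := pow_le_pow_left₀ hγ0 hγhalf _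
          _ ≤ (1/2 : ℝ) ^ 1 := pow_le_pow_of_le_one (by norm_num) (by norm_num)
              (Nat.one_le_two_pow)
          _ = 1/2 := pow_one _
      have h1 := hP2 (k₀ + n) (ih.trans hpow)
      have h2 : (c * G (k₀ + n)) ^ 2 ≤ (γ ^ 2 ^ n) ^ 2 :=
        pow_le_pow_left₀ (mul_nonneg hcpos.le (hGnn _)) ih 2
      have h3 : (γ ^ 2 ^ n) ^ 2 = γ ^ 2 ^ (n + 1) := by
        rw [← pow_mul, pow_succ]
      have h4 : k₀ + (n + 1) = (k₀ + n) + 1 := by omega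
      rw [h4]
      calc c * G ((k₀ + n) + 1) ≤ (c * G (k₀ + n)) ^ 2 := h1
        _ ≤ (γ ^ 2 ^ n) ^ 2 := h2
        _ = γ ^ 2 ^ (n + 1) := h3
  -- distance bound
  have hdist : ∀ k, μ * ‖x k - xs‖ ≤ G k := by
    intro k
    have := dan_dist_lb hf hμ.le hstrong xs (x k)
    rwa [hxs, sub_zero] at this
  constructor
  · intro k hk
    have h1 := hind k hk
    have h2 := hdist k
    have hkk : (0:ℝ) ≤ (k₀ : ℝ) - (k : ℝ) := by
      have : (k:ℝ) ≤ (k₀:ℝ) := by exact_mod_cast hk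
      linarith
    have h1γ : 0 < 1 - γ := by linarith
    have h3 : 2 * γ ≤ 2 * γ / (1 - γ) := by
      rw [le_div_iff₀ h1γ]
      nlinarith
    -- ‖x k - xs‖ ≤ G k / μ ≤ (γ + (k₀-k)/4)/c
    have h4 : ‖x k - xs‖ ≤ (γ + ((k₀:ℝ) - (k:ℝ)) / 4) / (c * μ) := by
      rw [le_div_iff₀ (by positivity)]
      nlinarith [norm_nonneg (x k - xs)]
    have h5 : (γ + ((k₀:ℝ) - (k:ℝ)) / 4) / (c * μ) =
        2 * μ / L * (γ + ((k₀:ℝ) - (k:ℝ)) / 4) := by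
      rw [hc]; field_simp
    rw [h5] at h4
    have h6 : 2 * μ / L * (γ + ((k₀:ℝ) - (k:ℝ)) / 4)
        ≤ μ / L * (((k₀:ℝ) - (k:ℝ)) + 2 * γ / (1 - γ)) := by
      have hμL : 0 < μ / L := by positivity
      have : 2 * (γ + ((k₀:ℝ) - (k:ℝ)) / 4) ≤ ((k₀:ℝ) - (k:ℝ)) + 2 * γ / (1 - γ) := by
        linarith
      calc 2 * μ / L * (γ + ((k₀:ℝ) - (k:ℝ)) / 4)
          = μ / L * (2 * (γ + ((k₀:ℝ) - (k:ℝ)) / 4)) := by ring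
        _ ≤ μ / L * (((k₀:ℝ) - (k:ℝ)) + 2 * γ / (1 - γ)) :=
            mul_le_mul_of_nonneg_left this hμL.le
    exact h4.trans h6
  · intro k hk
    set j := k - k₀ with hj
    have hkj : k = k₀ + j := by omega
    have h1 : c * G k ≤ γ ^ 2 ^ j := by rw [hkj]; exact hind2 j
    set t : ℝ := γ ^ 2 ^ j with ht
    have htnn : 0 ≤ t := pow_nonneg hγ0 _
    have hthalf : t ≤ 1/2 := by
      rw [ht]
      calc γ ^ 2 ^ j ≤ (1/2 : ℝ) ^ 2 ^ j := pow_le_pow_left₀ hγ0 hγhalf _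
        _ ≤ (1/2 : ℝ) ^ 1 := pow_le_pow_of_le_one (by norm_num) (by norm_num)
            (Nat.one_le_two_pow)
        _ = 1/2 := pow_one _
    have h2 := hdist k
    have h4 : ‖x k - xs‖ ≤ t / (c * μ) := by
      rw [le_div_iff₀ (by positivity)]
      nlinarith [norm_nonneg (x k - xs)]
    have h5 : t / (c * μ) = 2 * μ * t / L := by
      rw [hc]; field_simp
    rw [h5] at h4
    have h6 : 2 * μ * t / L ≤ 2 * μ * t / (L * (1 - t)) := by
      apply div_le_div_of_nonneg_left (by positivity) (by nlinarith) (by nlinarith)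
    exact h4.trans h6
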